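/- Every Lindelöf P-space is exponentially separable. -/
import Mathlib


/-- A space is exponentially separable. -/
def ExpSep (X : Type*) [TopologicalSpace X] : Prop :=
  ∀ F : Set (Set X), F.Countable → (∀ C ∈ F, IsClosed C) →
    ∃ A : Set X, A.Countable ∧ ∀ G ⊆ F, (⋂₀ G).Nonempty → (A ∩ ⋂₀ G).Nonempty

theorem stmt10 (X : Type*) [TopologicalSpace X] [LindelofSpace X]
    (hP : ∀ s : Set X, IsGδ s → IsOpen s) : ExpSep X := by
  intro F hFc hFcl
  -- For each x, the open set avoiding all members of F not containing x
  set U : X → Set X := fun x => ⋂ C ∈ {C | C ∈ F ∧ x ∉ C}, Cᶜ with hU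
  have hUo : ∀ x, IsOpen (U x) := by
    intro x
    apply hP
    apply IsGδ.biInter_of_isOpen (hFc.mono (fun C hC => hC.1))
    intro C hC
    exact (hFcl C hC.1).isOpen_compl
  have hxU : ∀ x, x ∈ U x := by
    intro x
    simp only [hU, Set.mem_iInter]
    intro C hC
    exact hC.2
  obtain ⟨t, htc, htcov⟩ := isLindelof_univ.elim_countable_subcover U hUo
    (fun x _ => Set.mem_iUnion.2 ⟨x, hxU x⟩)
  refine ⟨t, htc, fun G hGF ⟨y, hy⟩ => ?_⟩
  obtain ⟨x, hxt, hyUx⟩ := Set.mem_iUnion₂.1 (htcov (Set.mem_univ y))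
  refine ⟨x, hxt, fun C hCG => ?_⟩
  by_contra hxC
  have : y ∈ Cᶜ := by
    have := Set.mem_iInter₂.1 hyUx C ⟨hGF hCG, hxC⟩
    exact this
  exact this (hy C hCG)
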